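/- Let n and p be positive integers with 2n ≤ p, and let J_{2n} denote the 2n×2n block matrix [[0, I_n], [-I_n, 0]]. Suppose A, A' are complex p×2n matrices of rank 2n with A·J_{2n}·Aᵀ = A'·J_{2n}·A'ᵀ. Then there exists a unique invertible 2n×2n complex matrix g with g·J_{2n}·gᵀ = J_{2n} (i.e. g ∈ Sp(2n,ℂ)) such that A' = A·g. -/

import Mathlib

open Matrix

lemma exists_left_inv {p : ℕ} {ι : Type} [Fintype ι] [DecidableEq ι]
    (A : Matrix (Fin p) ι ℂ) (hA : A.rank = Fintype.card ι) :
    ∃ B : Matrix ι (Fin p) ℂ, B * A = 1 := by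
  have hker : LinearMap.ker A.mulVecLin = ⊥ := by
    have h1 := A.mulVecLin.finrank_range_add_finrank_ker
    rw [show Module.finrank ℂ (ι → ℂ) = Fintype.card ι from Module.finrank_pi ℂ] at h1
    have : Module.finrank ℂ (LinearMap.ker A.mulVecLin) = 0 := by
      have : Matrix.rank A = Module.finrank ℂ (LinearMap.range A.mulVecLin) := rfl
      omega
    exact Submodule.finrank_eq_zero.mp this
  obtain ⟨g, hg⟩ := LinearMap.exists_leftInverse_of_injective A.mulVecLin hker
  refine ⟨LinearMap.toMatrix' g, ?_⟩
  have : A.mulVecLin = Matrix.toLin' A := rfl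
  rw [this] at hg
  calc LinearMap.toMatrix' g * A
      = LinearMap.toMatrix' g * LinearMap.toMatrix' (Matrix.toLin' A) := by
        rw [LinearMap.toMatrix'_toLin']
    _ = LinearMap.toMatrix' (g ∘ₗ Matrix.toLin' A) := (LinearMap.toMatrix'_comp _ _).symm
    _ = 1 := by rw [hg]; simp [LinearMap.toMatrix'_id]

theorem stmt_12 (n p : ℕ) (hn : 0 < n) (hp : 0 < p) (hnp : 2 * n ≤ p)
    (J : Matrix (Fin n ⊕ Fin n) (Fin n ⊕ Fin n) ℂ)
    (hJ : J = Matrix.fromBlocks 0 1 (-1) 0)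
    (A A' : Matrix (Fin p) (Fin n ⊕ Fin n) ℂ)
    (hA : A.rank = 2 * n) (hA' : A'.rank = 2 * n)
    (h : A * J * Aᵀ = A' * J * A'ᵀ) :
    ∃! g : Matrix (Fin n ⊕ Fin n) (Fin n ⊕ Fin n) ℂ,
      IsUnit g ∧ g * J * gᵀ = J ∧ A' = A * g := by
  have hcard : Fintype.card (Fin n ⊕ Fin n) = 2 * n := by simp [two_mul]
  obtain ⟨B, hB⟩ := exists_left_inv A (by rw [hA, hcard])
  obtain ⟨B', hB'⟩ := exists_left_inv A' (by rw [hA', hcard])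
  have hJJ : J * J = -1 := by
    subst hJ
    rw [Matrix.fromBlocks_multiply]
    rw [show ((-1 : Matrix (Fin n ⊕ Fin n) (Fin n ⊕ Fin n) ℂ)) =
      Matrix.fromBlocks (-1) 0 0 (-1) by
        rw [← Matrix.fromBlocks_one, Matrix.fromBlocks_neg]; simp]
    congr 1 <;> simp
  have hJnJ : J * -J = 1 := by rw [Matrix.mul_neg, hJJ, neg_neg]
  have hAB : Aᵀ * Bᵀ = 1 := by rw [← Matrix.transpose_mul, hB, Matrix.transpose_one]
  have hAB' : A'ᵀ * B'ᵀ = 1 := by rw [← Matrix.transpose_mul, hB', Matrix.transpose_one]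
  set g : Matrix (Fin n ⊕ Fin n) (Fin n ⊕ Fin n) ℂ := J * Aᵀ * B'ᵀ * -J with hg
  have hAg : A * g = A' := by
    have e1 : A * g = A * J * Aᵀ * B'ᵀ * -J := by
      rw [hg]; simp only [← Matrix.mul_assoc]
    rw [e1, h, Matrix.mul_assoc (A' * J) A'ᵀ B'ᵀ, hAB', Matrix.mul_one,
      Matrix.mul_assoc A' J (-J), hJnJ, Matrix.mul_one]
  have hsymp : g * J * gᵀ = J := by
    have key : A * g * J * (A * g)ᵀ = A * J * Aᵀ := by rw [hAg]; exact h.symm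
    rw [Matrix.transpose_mul] at key
    have key2 : B * (A * g * J * (gᵀ * Aᵀ)) = B * (A * J * Aᵀ) := by rw [key]
    simp only [← Matrix.mul_assoc] at key2
    rw [hB, Matrix.one_mul, Matrix.one_mul] at key2
    -- key2 : g * J * gᵀ * Aᵀ = J * Aᵀ
    have key3 : g * J * gᵀ * Aᵀ * Bᵀ = J * Aᵀ * Bᵀ := by rw [key2]
    rw [Matrix.mul_assoc (g * J * gᵀ) Aᵀ Bᵀ, Matrix.mul_assoc J Aᵀ Bᵀ, hAB,
      Matrix.mul_one, Matrix.mul_one] at key3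
    exact key3
  have hgu : IsUnit g := by
    refine (Matrix.isUnit_iff_isUnit_det g).mpr (Matrix.isUnit_det_of_right_inverse (B := J * gᵀ * -J) ?_)
    have : g * (J * gᵀ * -J) = g * J * gᵀ * -J := by simp only [← Matrix.mul_assoc]
    rw [this, hsymp, hJnJ]
  refine ⟨g, ⟨hgu, hsymp, hAg.symm⟩, ?_⟩
  rintro g' ⟨-, -, hg'⟩
  have : B * (A * g') = B * (A * g) := by rw [hAg, ← hg']
  rwa [← Matrix.mul_assoc, ← Matrix.mul_assoc, hB, Matrix.one_mul, Matrix.one_mul] at this
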